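/- Let 1 < q₂ ≤ q₁ < ∞, let A ∈ R^{m×N}, and set r = q₂(q₁−1)/(q₁(q₂−1)). For any real s with 1 ≤ s ≤ N^{1/r}, the q-ratio CMSVs satisfy ρ_{q₁,s}(A) ≥ ρ_{q₂, s^r}(A). -/

import Mathlib

open Finset Matrix

noncomputable def l1 {N : ℕ} (z : Fin N → ℝ) : ℝ := ∑ i, |z i|
noncomputable def lq {N : ℕ} (q : ℝ) (z : Fin N → ℝ) : ℝ := (∑ i, |z i| ^ q) ^ (1/q)
noncomputable def l2 {m : ℕ} (v : Fin m → ℝ) : ℝ := Real.sqrt (∑ i, (v i)^2)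
noncomputable def linf {N : ℕ} (z : Fin N → ℝ) : ℝ := ⨆ i, |z i|
open scoped Classical in
noncomputable def l0 {N : ℕ} (z : Fin N → ℝ) : ℕ := (Finset.univ.filter (fun i => z i ≠ 0)).card
noncomputable def sparsityQ {N : ℕ} (q : ℝ) (z : Fin N → ℝ) : ℝ := (l1 z / lq q z) ^ (q/(q-1))
noncomputable def cmsv {m N : ℕ} (q s : ℝ) (A : Matrix (Fin m) (Fin N) ℝ) : ℝ :=
  sInf { r | ∃ z : Fin N → ℝ, z ≠ 0 ∧ sparsityQ q z ≤ s ∧ r = l2 (A.mulVec z) / lq q z }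

lemma l1_nonneg {N : ℕ} (z : Fin N → ℝ) : 0 ≤ l1 z :=
  Finset.sum_nonneg fun _ _ => abs_nonneg _

lemma lq_nonneg {N : ℕ} (q : ℝ) (z : Fin N → ℝ) : 0 ≤ lq q z := by
  apply Real.rpow_nonneg
  exact Finset.sum_nonneg fun i _ => Real.rpow_nonneg (abs_nonneg _) _

lemma lq_pos {N : ℕ} {q : ℝ} (hq : 0 < q) {z : Fin N → ℝ} (hz : z ≠ 0) : 0 < lq q z := by
  obtain ⟨i, hi⟩ := Function.ne_iff.mp hz
  apply Real.rpow_pos_of_pos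
  apply Finset.sum_pos' (fun j _ => Real.rpow_nonneg (abs_nonneg _) _)
  exact ⟨i, Finset.mem_univ i, Real.rpow_pos_of_pos (abs_pos.mpr hi) _⟩

lemma lq_anti {N : ℕ} {p q : ℝ} (hp : 0 < p) (hpq : p ≤ q) (z : Fin N → ℝ) :
    lq q z ≤ lq p z := by
  have hq : 0 < q := lt_of_lt_of_le hp hpq
  set S : ℝ := ∑ i, |z i| ^ p with hS
  have hSnn : 0 ≤ S := Finset.sum_nonneg fun i _ => Real.rpow_nonneg (abs_nonneg _) _
  rcases eq_or_lt_of_le hSnn with h0 | hSpos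
  · -- S = 0, all z i = 0
    have hall : ∀ i, |z i| = 0 := by
      intro i
      have := (Finset.sum_eq_zero_iff_of_nonneg
        (fun j _ => Real.rpow_nonneg (abs_nonneg _) _)).mp h0.symm i (Finset.mem_univ i)
      have := (Real.rpow_eq_zero (abs_nonneg _) (ne_of_gt hp)).mp this
      exact this
    have : lq q z = 0 := by
      unfold lq
      rw [Finset.sum_eq_zero (fun i _ => by rw [hall i]; exact Real.zero_rpow (ne_of_gt hq))]
      exact Real.zero_rpow (by positivity)
    rw [this]; exact lq_nonneg _ _
  · have key : ∀ i, |z i| ^ q ≤ |z i| ^ p * S ^ ((q - p) / p) := by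
      intro i
      have h1 : |z i| ^ p ≤ S :=
        Finset.single_le_sum (fun j _ => Real.rpow_nonneg (abs_nonneg _) _) (Finset.mem_univ i)
      have h2 : |z i| ≤ S ^ (1/p) := by
        have := Real.rpow_le_rpow (Real.rpow_nonneg (abs_nonneg _) _) h1 (by positivity : (0:ℝ) ≤ 1/p)
        rwa [← Real.rpow_mul (abs_nonneg _), mul_one_div, div_self (ne_of_gt hp),
          Real.rpow_one] at this
      calc |z i| ^ q = |z i| ^ (p + (q - p)) := by ring_nf
        _ = |z i| ^ p * |z i| ^ (q - p) := by
            rw [Real.rpow_add' (abs_nonneg _) (by simpa using ne_of_gt hq)]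
        _ ≤ |z i| ^ p * (S ^ (1/p)) ^ (q - p) := by
            apply mul_le_mul_of_nonneg_left _ (Real.rpow_nonneg (abs_nonneg _) _)
            exact Real.rpow_le_rpow (abs_nonneg _) h2 (by linarith)
        _ = |z i| ^ p * S ^ ((q - p) / p) := by
            rw [← Real.rpow_mul hSnn]
            congr 1
            ring
    have hsum : (∑ i, |z i| ^ q) ≤ S ^ (q / p) := by
      calc (∑ i, |z i| ^ q) ≤ ∑ i, |z i| ^ p * S ^ ((q - p) / p) :=
            Finset.sum_le_sum fun i _ => key i
        _ = S * S ^ ((q - p) / p) := by rw [← Finset.sum_mul]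
        _ = S ^ (1 + (q - p)/p) := by
            rw [Real.rpow_add hSpos, Real.rpow_one]
        _ = S ^ (q / p) := by
            congr 1; field_simp; ring
    have := Real.rpow_le_rpow (Finset.sum_nonneg fun i _ => Real.rpow_nonneg (abs_nonneg _) _)
      hsum (by positivity : (0:ℝ) ≤ 1/q)
    unfold lq
    calc (∑ i, |z i| ^ q) ^ (1/q) ≤ (S ^ (q/p)) ^ (1/q) := this
      _ = S ^ (1/p) := by
          rw [← Real.rpow_mul hSnn]
          congr 1
          field_simp

theorem stmt7 {m N : ℕ} (A : Matrix (Fin m) (Fin N) ℝ) (q₁ q₂ s r : ℝ)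
    (hq₂ : 1 < q₂) (hq : q₂ ≤ q₁)
    (hr : r = q₂ * (q₁ - 1) / (q₁ * (q₂ - 1)))
    (hs1 : 1 ≤ s) (hs2 : s ≤ (N : ℝ) ^ (1/r)) :
    cmsv q₂ (s ^ r) A ≤ cmsv q₁ s A := by
  have hq₁ : 1 < q₁ := lt_of_lt_of_le hq₂ hq
  have hq₂0 : 0 < q₂ := by linarith
  have hq₁0 : 0 < q₁ := by linarith
  have hd₁ : (0:ℝ) < q₁ - 1 := by linarith
  have hd₂ : (0:ℝ) < q₂ - 1 := by linarith
  have hrpos : 0 < r := by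
    rw [hr]; exact div_pos (mul_pos hq₂0 hd₁) (mul_pos hq₁0 hd₂)
  unfold cmsv
  by_cases hN : N = 0
  · subst hN
    have h0 : ∀ z : Fin 0 → ℝ, z = 0 := fun z => funext fun i => i.elim0
    have e : ∀ (q' s' : ℝ),
        { x | ∃ z : Fin 0 → ℝ, z ≠ 0 ∧ sparsityQ q' z ≤ s' ∧
          x = l2 (A.mulVec z) / lq q' z } = (∅ : Set ℝ) := by
      intro q' s'
      ext x
      simp only [Set.mem_setOf_eq, Set.mem_empty_iff_false, iff_false]
      rintro ⟨z, hz, -⟩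
      exact hz (h0 z)
    rw [e, e]
  · have hNpos : 0 < N := Nat.pos_of_ne_zero hN
    classical
    -- nonemptiness witness
    set i0 : Fin N := ⟨0, hNpos⟩ with hi0
    set w : Fin N → ℝ := fun j => if j = i0 then 1 else 0 with hw
    have hw0 : w ≠ 0 := by
      intro h
      have := congrFun h i0
      simp [hw] at this
    have hl1w : l1 w = 1 := by
      unfold l1
      simp [hw, apply_ite abs]
    have hlqw : ∀ t : ℝ, 0 < t → lq t w = 1 := by
      intro t ht
      unfold lq
      have : ∀ j, |w j| ^ t = if j = i0 then (1:ℝ) else 0 := by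
        intro j
        by_cases hj : j = i0 <;>
          simp [hw, hj, Real.one_rpow, Real.zero_rpow (ne_of_gt ht)]
      rw [Finset.sum_congr rfl (fun j _ => this j)]
      simp [Real.one_rpow]
    have hspw : sparsityQ q₁ w ≤ s := by
      unfold sparsityQ
      rw [hl1w, hlqw q₁ hq₁0]
      simpa using hs1
    have hS1ne : Set.Nonempty { x | ∃ z : Fin N → ℝ, z ≠ 0 ∧ sparsityQ q₁ z ≤ s ∧
        x = l2 (A.mulVec z) / lq q₁ z } := ⟨_, w, hw0, hspw, rfl⟩
    have hbdd : BddBelow { x | ∃ z : Fin N → ℝ, z ≠ 0 ∧ sparsityQ q₂ z ≤ s ^ r ∧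
        x = l2 (A.mulVec z) / lq q₂ z } := by
      refine ⟨0, ?_⟩
      rintro x ⟨z, hz, hsp, rfl⟩
      exact div_nonneg (Real.sqrt_nonneg _) (lq_nonneg _ _)
    apply le_csInf hS1ne
    rintro b ⟨z, hz, hsp, rfl⟩
    have hlq1 : 0 < lq q₁ z := lq_pos hq₁0 hz
    have hlq2 : 0 < lq q₂ z := lq_pos hq₂0 hz
    have hmon : lq q₁ z ≤ lq q₂ z := lq_anti hq₂0 hq z
    have hdnn : 0 ≤ l1 z / lq q₁ z := div_nonneg (l1_nonneg z) (lq_nonneg _ _)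
    have hkey : sparsityQ q₂ z ≤ s ^ r := by
      have hdiv : l1 z / lq q₂ z ≤ l1 z / lq q₁ z := by
        gcongr
        exact l1_nonneg z
      have hq₁ne : q₁ ≠ 0 := ne_of_gt hq₁0
      have hd₁ne : q₁ - 1 ≠ 0 := ne_of_gt hd₁
      have hd₂ne : q₂ - 1 ≠ 0 := ne_of_gt hd₂
      have e2 : q₁ / (q₁ - 1) * r = q₂ / (q₂ - 1) := by
        rw [hr]; field_simp
      calc sparsityQ q₂ z = (l1 z / lq q₂ z) ^ (q₂ / (q₂ - 1)) := rfl
        _ ≤ (l1 z / lq q₁ z) ^ (q₂ / (q₂ - 1)) :=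
            Real.rpow_le_rpow (div_nonneg (l1_nonneg z) (lq_nonneg _ _)) hdiv
              (le_of_lt (div_pos hq₂0 hd₂))
        _ = ((l1 z / lq q₁ z) ^ (q₁ / (q₁ - 1))) ^ r := by
            rw [← Real.rpow_mul hdnn, e2]
        _ = sparsityQ q₁ z ^ r := rfl
        _ ≤ s ^ r :=
            Real.rpow_le_rpow (Real.rpow_nonneg hdnn _) hsp (le_of_lt hrpos)
    have hmem : l2 (A.mulVec z) / lq q₂ z ∈ { x | ∃ z : Fin N → ℝ, z ≠ 0 ∧
        sparsityQ q₂ z ≤ s ^ r ∧ x = l2 (A.mulVec z) / lq q₂ z } := ⟨z, hz, hkey, rfl⟩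
    calc sInf { x | ∃ z : Fin N → ℝ, z ≠ 0 ∧ sparsityQ q₂ z ≤ s ^ r ∧
          x = l2 (A.mulVec z) / lq q₂ z } ≤ l2 (A.mulVec z) / lq q₂ z := csInf_le hbdd hmem
      _ ≤ l2 (A.mulVec z) / lq q₁ z := by
          gcongr
          exact Real.sqrt_nonneg _
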